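/- (Theorem A.1 / Theorem 8.1) Let A be a real n×n matrix with non-negative off-diagonal entries such that A + δI is non-negative and irreducible for large δ > 0. Suppose X₀ > 0 (componentwise nonnegative, nonzero), Y > 0, and the solution of X'(t) = AX(t), X(0) = X₀ satisfies ⟨Y, X(t)⟩ = χ₁ e^{χ₂ t} for all t ∈ [0, τ], where χ₁ > 0, τ > 0. Then χ₂ = s(A), the spectral bound (dominant eigenvalue) of A, and χ₁ = ⟨Y, ΠX₀⟩ where Π is the Perron projection onto the dominant eigenspace. -/

import Mathlib

open Matrix

/-- A nonnegative square matrix is irreducible when every node can reach every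
node through the associated directed graph, i.e. some power has a positive
`(i,j)` entry for every `i, j`. -/
def MatIrred {n : ℕ} (B : Matrix (Fin n) (Fin n) ℝ) : Prop :=
  ∀ i j : Fin n, ∃ m : ℕ, 0 < (B ^ m) i j

/-- The spectral bound of a real matrix: the supremum of the real parts of its
complex eigenvalues. -/
noncomputable def spectralBound {n : ℕ} (A : Matrix (Fin n) (Fin n) ℝ) : ℝ :=
  sSup {x : ℝ | ∃ μ ∈ spectrum ℂ (A.map (Complex.ofReal ·)), μ.re = x}

section Aux
open Finset Polynomial

lemma aux_mom {n : ℕ} (A : Matrix (Fin n) (Fin n) ℝ)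
    (X : ℝ → (Fin n → ℝ)) (X₀ Y : Fin n → ℝ) (hX0 : X 0 = X₀)
    (hode : ∀ (t : ℝ) (i : Fin n), HasDerivAt (fun s => X s i) ((A.mulVec (X t)) i) t)
    (χ₁ χ₂ τ : ℝ) (hτ : 0 < τ)
    (hout : ∀ t ∈ Set.Icc (0 : ℝ) τ, (∑ i, Y i * X t i) = χ₁ * Real.exp (χ₂ * t)) :
    ∀ k : ℕ, Y ⬝ᵥ (A ^ k) *ᵥ X₀ = χ₁ * χ₂ ^ k := by
  have hder : ∀ (M : Matrix (Fin n) (Fin n) ℝ) (t : ℝ),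
      HasDerivAt (fun s => Y ⬝ᵥ M *ᵥ X s) (Y ⬝ᵥ M *ᵥ (A *ᵥ X t)) t := by
    intro M t
    have h : HasDerivAt (fun s => ∑ i, Y i * ∑ j, M i j * X s j)
        (∑ i, Y i * ∑ j, M i j * (A *ᵥ X t) j) t := by
      refine HasDerivAt.fun_sum (fun i _ => ?_)
      exact (HasDerivAt.fun_sum (fun j _ => (hode t j).const_mul (M i j))).const_mul (Y i)
    simpa [dotProduct, Matrix.mulVec] using h
  have hcont : ∀ (M : Matrix (Fin n) (Fin n) ℝ),
      Continuous (fun s => Y ⬝ᵥ M *ᵥ X s) := fun M =>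
    continuous_iff_continuousAt.2 (fun t => (hder M t).continuousAt)
  have key : ∀ k : ℕ, ∀ t ∈ Set.Icc (0:ℝ) τ,
      Y ⬝ᵥ (A ^ k) *ᵥ X t = χ₁ * χ₂ ^ k * Real.exp (χ₂ * t) := by
    intro k
    induction k with
    | zero =>
      intro t ht
      simpa [dotProduct, Matrix.mulVec, Matrix.one_apply] using hout t ht
    | succ k ih =>
      have hIoo : ∀ t ∈ Set.Ioo (0:ℝ) τ,
          Y ⬝ᵥ (A ^ (k+1)) *ᵥ X t = χ₁ * χ₂ ^ (k+1) * Real.exp (χ₂ * t) := by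
        intro t ht
        have heq : (fun s => Y ⬝ᵥ (A ^ k) *ᵥ X s)
            =ᶠ[nhds t] (fun s => χ₁ * χ₂ ^ k * Real.exp (χ₂ * s)) := by
          filter_upwards [Ioo_mem_nhds ht.1 ht.2] with s hs
          exact ih s ⟨hs.1.le, hs.2.le⟩
        have h1 : HasDerivAt (fun s => Y ⬝ᵥ (A ^ k) *ᵥ X s)
            (Y ⬝ᵥ (A ^ (k+1)) *ᵥ X t) t := by
          have := hder (A ^ k) t
          rwa [Matrix.mulVec_mulVec, ← pow_succ] at this
        have h2 : HasDerivAt (fun s => χ₁ * χ₂ ^ k * Real.exp (χ₂ * s))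
            (χ₁ * χ₂ ^ k * (Real.exp (χ₂ * t) * χ₂)) t := by
          have : HasDerivAt (fun s : ℝ => χ₂ * s) χ₂ t := by
            simpa using (hasDerivAt_id t).const_mul χ₂
          exact ((Real.hasDerivAt_exp (χ₂ * t)).comp t this).const_mul _
        have := (h1.congr_of_eventuallyEq heq.symm).unique h2
        rw [this]; ring
      have hcl : Set.EqOn (fun t => Y ⬝ᵥ (A ^ (k+1)) *ᵥ X t)
          (fun t => χ₁ * χ₂ ^ (k+1) * Real.exp (χ₂ * t)) (closure (Set.Ioo 0 τ)) := by
        apply Set.EqOn.closure (fun t ht => hIoo t ht) (hcont _)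
        continuity
      intro t ht
      have := hcl (show t ∈ closure (Set.Ioo 0 τ) by
        rw [closure_Ioo hτ.ne]; exact ht)
      simpa using this
  intro k
  have := key k 0 ⟨le_refl _, hτ.le⟩
  simpa [hX0] using this

lemma aux_mom_poly {n : ℕ} (A : Matrix (Fin n) (Fin n) ℝ) (X₀ Y : Fin n → ℝ)
    (χ₁ χ₂ : ℝ) (h : ∀ k : ℕ, Y ⬝ᵥ (A ^ k) *ᵥ X₀ = χ₁ * χ₂ ^ k) :
    ∀ p : Polynomial ℝ, Y ⬝ᵥ (Polynomial.aeval A p) *ᵥ X₀ = χ₁ * p.eval χ₂ := by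
  have hmon : ∀ (a : ℝ) (k : ℕ),
      Y ⬝ᵥ (Polynomial.aeval A (C a * X ^ k)) *ᵥ X₀ = χ₁ * (C a * X ^ k).eval χ₂ := by
    intro a k
    have : Polynomial.aeval A (C a * X ^ k) = a • A ^ k := by
      simp [Algebra.algebraMap_eq_smul_one, smul_mul_assoc]
    rw [this, smul_mulVec, dotProduct_smul, h k]
    simp; ring
  intro p
  induction p using Polynomial.induction_on with
  | C a => simpa using hmon a 0
  | add p q hp hq =>
    rw [map_add, add_mulVec, dotProduct_add, hp, hq, Polynomial.eval_add]; ring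
  | monomial k a _ => exact hmon a (k+1)

lemma aux_mem_spectrum {n : ℕ} (A' : Matrix (Fin n) (Fin n) ℂ) (Y' X₀' : Fin n → ℂ)
    (c₁ c₂ : ℂ) (hc₁ : c₁ ≠ 0)
    (h : ∀ k : ℕ, Y' ⬝ᵥ (A' ^ k) *ᵥ X₀' = c₁ * c₂ ^ k) :
    c₂ ∈ spectrum ℂ A' := by
  rw [spectrum.mem_iff]
  intro hU
  set M : Matrix (Fin n) (Fin n) ℂ := algebraMap ℂ _ c₂ - A' with hM
  -- injectivity of mulVec M
  have hinj : Function.Injective M.mulVec := by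
    obtain ⟨u, hu⟩ := hU
    intro x y hxy
    have : ((↑u⁻¹ : Matrix (Fin n) (Fin n) ℂ) * M) *ᵥ x = ((↑u⁻¹ : Matrix (Fin n) (Fin n) ℂ) * M) *ᵥ y := by
      rw [← Matrix.mulVec_mulVec, ← Matrix.mulVec_mulVec, hxy]
    rwa [← hu, Units.inv_mul, Matrix.one_mulVec, Matrix.one_mulVec] at this
  set V : Submodule ℂ (Fin n → ℂ) :=
    Submodule.span ℂ (Set.range (fun k : ℕ => (A' ^ k) *ᵥ X₀')) with hV
  have hgen : ∀ k : ℕ, (A' ^ k) *ᵥ X₀' ∈ V := fun k =>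
    Submodule.subset_span ⟨k, rfl⟩
  have hMV : ∀ v ∈ V, M *ᵥ v ∈ V := by
    intro v hv
    induction hv using Submodule.span_induction with
    | mem x hx =>
      obtain ⟨k, rfl⟩ := hx
      have : M *ᵥ ((A' ^ k) *ᵥ X₀') = c₂ • ((A' ^ k) *ᵥ X₀') - (A' ^ (k+1)) *ᵥ X₀' := by
        rw [hM, sub_mulVec, Algebra.algebraMap_eq_smul_one, smul_mulVec,
          one_mulVec, Matrix.mulVec_mulVec, ← pow_succ']
      rw [this]
      exact sub_mem (Submodule.smul_mem _ _ (hgen k)) (hgen (k+1))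
    | zero => simp [Matrix.mulVec_zero]
    | add x y _ _ hx hy => rw [Matrix.mulVec_add]; exact add_mem hx hy
    | smul a x _ hx => rw [Matrix.mulVec_smul]; exact Submodule.smul_mem _ _ hx
  let e : V →ₗ[ℂ] V := (Matrix.mulVecLin M).restrict (fun x hx => hMV x hx)
  have he : Function.Injective e := by
    intro x y hxy
    apply Subtype.ext
    apply hinj
    exact congrArg Subtype.val hxy
  have hsurj : Function.Surjective e := (LinearMap.injective_iff_surjective).1 he
  have hX₀V : X₀' ∈ V := by simpa using hgen 0
  obtain ⟨w, hw⟩ := hsurj ⟨X₀', hX₀V⟩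
  have hw' : M *ᵥ (w : Fin n → ℂ) = X₀' := congrArg Subtype.val hw
  have horth : ∀ v ∈ V, Y' ⬝ᵥ (M *ᵥ v) = 0 := by
    intro v hv
    induction hv using Submodule.span_induction with
    | mem x hx =>
      obtain ⟨k, rfl⟩ := hx
      rw [hM, sub_mulVec, Algebra.algebraMap_eq_smul_one, smul_mulVec,
        one_mulVec, Matrix.mulVec_mulVec, ← pow_succ', dotProduct_sub,
        dotProduct_smul, h k, h (k+1)]
      simp [pow_succ]; ring
    | zero => simp
    | add x y _ _ hx hy => rw [Matrix.mulVec_add, dotProduct_add, hx, hy, add_zero]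
    | smul a x _ hx => rw [Matrix.mulVec_smul, dotProduct_smul, hx, smul_zero]
  have : Y' ⬝ᵥ X₀' = 0 := by rw [← hw']; exact horth _ w.2
  have h0 : Y' ⬝ᵥ X₀' = c₁ := by simpa using h 0
  exact hc₁ (by rw [← h0, this])

lemma aux_map_pow {n : ℕ} (B : Matrix (Fin n) (Fin n) ℝ) (k : ℕ) :
    (B.map (Complex.ofReal ·)) ^ k = (B ^ k).map (Complex.ofReal ·) := by
  have h := map_pow (Complex.ofRealHom.mapMatrix (m := Fin n)) B k
  exact h.symm

lemma aux_abs_le {n : ℕ} (B : Matrix (Fin n) (Fin n) ℝ) (r : ℝ) (hr : 0 < r)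
    (hnn : ∀ (k : ℕ) (i j : Fin n), 0 ≤ (B ^ k) i j)
    (hC : ∀ i j : Fin n, ∃ C : ℝ, 0 ≤ C ∧ ∀ k : ℕ, (B ^ k) i j ≤ C * r ^ k)
    (ν : ℂ) (hν : ν ∈ spectrum ℂ (B.map (Complex.ofReal ·))) :
    ‖ν‖ ≤ r := by
  set B' := B.map (Complex.ofReal ·) with hB'
  have hdet : (algebraMap ℂ _ ν - B').det = 0 := by
    rw [spectrum.mem_iff] at hν
    by_contra hd
    exact hν ((Matrix.isUnit_iff_isUnit_det _).2 (isUnit_iff_ne_zero.2 hd))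
  obtain ⟨v, hv0, hv⟩ := (Matrix.exists_mulVec_eq_zero_iff).2 hdet
  have hBv : B' *ᵥ v = ν • v := by
    have := hv
    rw [sub_mulVec, Algebra.algebraMap_eq_smul_one, smul_mulVec, one_mulVec,
      sub_eq_zero] at this
    exact this.symm
  have hpow : ∀ k : ℕ, (B' ^ k) *ᵥ v = ν ^ k • v := by
    intro k
    induction k with
    | zero => simp [one_mulVec]
    | succ k ih =>
      rw [pow_succ', ← Matrix.mulVec_mulVec, ih, Matrix.mulVec_smul, hBv,
        smul_smul, ← pow_succ]
  obtain ⟨i, hi⟩ := Function.ne_iff.1 hv0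
  replace hi : v i ≠ 0 := by simpa using hi
  -- choose constants
  choose C hC0 hCk using hC
  have key : ∀ k : ℕ, (‖ν‖) ^ k * ‖v i‖
      ≤ (∑ j, C i j * ‖v j‖) * r ^ k := by
    intro k
    have h1 : (ν ^ k • v) i = ∑ j, ((B ^ k) i j : ℂ) * v j := by
      rw [← hpow k, aux_map_pow]
      rfl
    have h2 : ‖(ν ^ k • v) i‖ ≤ ∑ j, ((B ^ k) i j) * ‖v j‖ := by
      rw [h1]
      refine le_trans (norm_sum_le _ _) ?_
      apply Finset.sum_le_sum
      intro j _
      rw [norm_mul, Complex.norm_real, Real.norm_eq_abs, abs_of_nonneg (hnn k i j)]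
    have h3 : ‖(ν ^ k • v) i‖ = (‖ν‖) ^ k * ‖v i‖ := by
      simp [Pi.smul_apply, smul_eq_mul, norm_mul, norm_pow]
    rw [← h3]
    refine h2.trans ?_
    rw [Finset.sum_mul]
    refine Finset.sum_le_sum (fun j _ => ?_)
    have := hCk i j k
    have hvj : 0 ≤ ‖v j‖ := norm_nonneg _
    calc (B ^ k) i j * ‖v j‖ ≤ (C i j * r ^ k) * ‖v j‖ := by
          exact mul_le_mul_of_nonneg_right this hvj
      _ = C i j * ‖v j‖ * r ^ k := by ring
  by_contra hlt
  push_neg at hlt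
  have h1 : 1 < ‖ν‖ / r := (one_lt_div hr).2 hlt
  have htend := tendsto_pow_atTop_atTop_of_one_lt h1
  set K := (∑ j, C i j * ‖v j‖) / ‖v i‖ with hK
  have hbd : ∀ k : ℕ, (‖ν‖ / r) ^ k ≤ K := by
    intro k
    have hvi : 0 < ‖v i‖ := norm_pos_iff.2 hi
    rw [div_pow, hK, div_le_div_iff₀ (pow_pos hr k) hvi]
    exact key k
  obtain ⟨k, hk⟩ := (htend.eventually_gt_atTop K).exists
  exact absurd (hbd k) (not_le.2 hk)
end Aux

/-- (Theorem A.1 / Theorem 8.1.) Let `A` be a real `n × n` matrix with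
nonnegative off-diagonal entries such that `A + δ•1` is nonnegative and
irreducible for all large `δ`. If `X₀ > 0`, `Y > 0`, the solution of
`X' = A X`, `X 0 = X₀` satisfies `⟨Y, X t⟩ = χ₁ e^{χ₂ t}` on `[0, τ]` with
`χ₁ > 0`, `τ > 0`, then `χ₂ = s(A)` and `χ₁ = ⟨Y, Π X₀⟩` where
`Π x = ⟨V_L, x⟩ V_R / ⟨V_L, V_R⟩` is the Perron projection built from any
strictly positive right/left eigenvectors `V_R`, `V_L` of `A` for `s(A)`. -/
theorem stmt_12 (n : ℕ) (hn : 0 < n) (A : Matrix (Fin n) (Fin n) ℝ)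
    (hoffdiag : ∀ i j : Fin n, i ≠ j → 0 ≤ A i j)
    (hirr : ∃ δ₀ : ℝ, ∀ δ : ℝ, δ₀ ≤ δ →
      (∀ i j : Fin n, 0 ≤ (A + δ • (1 : Matrix (Fin n) (Fin n) ℝ)) i j) ∧
      MatIrred (A + δ • (1 : Matrix (Fin n) (Fin n) ℝ)))
    (X : ℝ → (Fin n → ℝ)) (X₀ Y : Fin n → ℝ)
    (hX₀ : (∀ i, 0 ≤ X₀ i) ∧ X₀ ≠ 0) (hY : (∀ i, 0 ≤ Y i) ∧ Y ≠ 0)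
    (hX0 : X 0 = X₀)
    (hode : ∀ (t : ℝ) (i : Fin n),
      HasDerivAt (fun s => X s i) ((A.mulVec (X t)) i) t)
    (χ₁ χ₂ τ : ℝ) (hχ₁ : 0 < χ₁) (hτ : 0 < τ)
    (hout : ∀ t ∈ Set.Icc (0 : ℝ) τ,
      (∑ i, Y i * X t i) = χ₁ * Real.exp (χ₂ * t)) :
    χ₂ = spectralBound A ∧
    ∀ V_R V_L : Fin n → ℝ,
      (∀ i, 0 < V_R i) → (∀ i, 0 < V_L i) →
      A.mulVec V_R = spectralBound A • V_R →
      A.transpose.mulVec V_L = spectralBound A • V_L →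
      χ₁ = (∑ i, Y i * V_R i) * (∑ i, V_L i * X₀ i) / (∑ i, V_L i * V_R i) := by
  obtain ⟨hX₀nn, hX₀ne⟩ := hX₀
  obtain ⟨hYnn, hYne⟩ := hY
  obtain ⟨δ₀, hδ⟩ := hirr
  set δ : ℝ := max δ₀ (1 - χ₂) with hδdef
  obtain ⟨hBnn, hBirr⟩ := hδ δ (le_max_left _ _)
  set B : Matrix (Fin n) (Fin n) ℝ := A + δ • (1 : Matrix (Fin n) (Fin n) ℝ) with hB
  set r : ℝ := χ₂ + δ with hrdef
  have hr1 : 1 ≤ r := by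
    have : 1 - χ₂ ≤ δ := le_max_right _ _
    simp only [hrdef]; linarith
  have hrpos : 0 < r := lt_of_lt_of_le one_pos hr1
  have mom := aux_mom A X X₀ Y hX0 hode χ₁ χ₂ τ hτ hout
  have mom_poly := aux_mom_poly A X₀ Y χ₁ χ₂ mom
  have hχ₁YX : Y ⬝ᵥ X₀ = χ₁ := by simpa using mom 0
  -- nonnegativity of powers of B
  have hBk_nn : ∀ (k : ℕ) (i j : Fin n), 0 ≤ (B ^ k) i j := by
    intro k
    induction k with
    | zero => intro i j; rcases eq_or_ne i j with h | h <;>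
        simp [pow_zero, Matrix.one_apply, h]
    | succ k ih =>
      intro i j
      rw [pow_succ, Matrix.mul_apply]
      exact Finset.sum_nonneg (fun l _ => mul_nonneg (ih i l) (hBnn l j))
  -- moments for B
  have momB : ∀ k : ℕ, Y ⬝ᵥ (B ^ k) *ᵥ X₀ = χ₁ * r ^ k := by
    intro k
    have h := mom_poly ((Polynomial.X + Polynomial.C δ) ^ k)
    have h1 : Polynomial.aeval A ((Polynomial.X + Polynomial.C δ) ^ k) = B ^ k := by
      rw [map_pow, map_add, Polynomial.aeval_X, Polynomial.aeval_C,
        Algebra.algebraMap_eq_smul_one]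
    have h2 : ((Polynomial.X + Polynomial.C δ) ^ k).eval χ₂ = r ^ k := by
      simp [hrdef]
    rw [h1, h2] at h
    exact h
  -- positive components of Y and X₀
  have hex : ∀ (v : Fin n → ℝ), (∀ i, 0 ≤ v i) → v ≠ 0 → ∃ i, 0 < v i := by
    intro v hv hv0
    obtain ⟨i, hi⟩ := Function.ne_iff.1 hv0
    exact ⟨i, (hv i).lt_of_ne (by simpa using (Ne.symm hi))⟩
  obtain ⟨i₀, hi₀⟩ := hex Y hYnn hYne
  obtain ⟨j₀, hj₀⟩ := hex X₀ hX₀nn hX₀ne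
  -- generic lower bound for the observable
  have dot_ge : ∀ (M : Matrix (Fin n) (Fin n) ℝ), (∀ a b, 0 ≤ M a b) →
      Y i₀ * (M i₀ j₀ * X₀ j₀) ≤ Y ⬝ᵥ M *ᵥ X₀ := by
    intro M hM
    have hmv : ∀ a, (M *ᵥ X₀) a = ∑ b, M a b * X₀ b := fun a => rfl
    have hinner : ∀ a, 0 ≤ (M *ᵥ X₀) a := fun a => by
      rw [hmv a]; exact Finset.sum_nonneg (fun b _ => mul_nonneg (hM a b) (hX₀nn b))
    have h1 : M i₀ j₀ * X₀ j₀ ≤ (M *ᵥ X₀) i₀ := by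
      rw [hmv i₀]
      exact Finset.single_le_sum (f := fun b => M i₀ b * X₀ b)
        (fun b _ => mul_nonneg (hM i₀ b) (hX₀nn b)) (Finset.mem_univ j₀)
    calc Y i₀ * (M i₀ j₀ * X₀ j₀) ≤ Y i₀ * (M *ᵥ X₀) i₀ :=
          mul_le_mul_of_nonneg_left h1 (hYnn i₀)
      _ ≤ Y ⬝ᵥ M *ᵥ X₀ := Finset.single_le_sum
          (f := fun a => Y a * (M *ᵥ X₀) a)
          (fun a _ => mul_nonneg (hYnn a) (hinner a)) (Finset.mem_univ i₀)
  -- entrywise growth bound for powers of B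
  have hkey : ∀ i j : Fin n, ∃ C : ℝ, 0 ≤ C ∧ ∀ k : ℕ, (B ^ k) i j ≤ C * r ^ k := by
    intro i j
    obtain ⟨m₁, hm₁⟩ := hBirr i₀ i
    obtain ⟨m₂, hm₂⟩ := hBirr j j₀
    have hPpos : 0 < Y i₀ * X₀ j₀ * ((B ^ m₁) i₀ i * (B ^ m₂) j j₀) :=
      mul_pos (mul_pos hi₀ hj₀) (mul_pos hm₁ hm₂)
    refine ⟨χ₁ * r ^ (m₁ + m₂) / (Y i₀ * X₀ j₀ * ((B ^ m₁) i₀ i * (B ^ m₂) j j₀)),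
      le_of_lt (div_pos (mul_pos hχ₁ (pow_pos hrpos _)) hPpos), ?_⟩
    intro k
    have e0 : (B ^ k * B ^ m₂) i j₀ ≥ (B ^ k) i j * (B ^ m₂) j j₀ := by
      rw [Matrix.mul_apply]
      exact Finset.single_le_sum (f := fun b => (B ^ k) i b * (B ^ m₂) b j₀)
        (fun b _ => mul_nonneg (hBk_nn k i b) (hBk_nn m₂ b j₀)) (Finset.mem_univ j)
    have e1 : (B ^ m₁) i₀ i * ((B ^ k) i j * (B ^ m₂) j j₀)
        ≤ (B ^ (m₁ + (k + m₂))) i₀ j₀ := by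
      rw [pow_add, pow_add, Matrix.mul_apply]
      have step : (B ^ m₁) i₀ i * ((B ^ k * B ^ m₂) i j₀)
          ≤ ∑ a, (B ^ m₁) i₀ a * (B ^ k * B ^ m₂) a j₀ := by
        refine Finset.single_le_sum (f := fun a => (B ^ m₁) i₀ a * (B ^ k * B ^ m₂) a j₀)
          (fun a _ => mul_nonneg (hBk_nn m₁ i₀ a) ?_) (Finset.mem_univ i)
        rw [← pow_add]; exact hBk_nn _ a j₀
      refine le_trans ?_ step
      exact mul_le_mul_of_nonneg_left e0 (hBk_nn m₁ i₀ i)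
    have e2 := dot_ge (B ^ (m₁ + (k + m₂))) (hBk_nn _)
    rw [momB] at e2
    have e3 : Y i₀ * ((B ^ m₁) i₀ i * ((B ^ k) i j * (B ^ m₂) j j₀) * X₀ j₀)
        ≤ χ₁ * r ^ (m₁ + (k + m₂)) := by
      refine le_trans ?_ e2
      have := mul_le_mul_of_nonneg_right e1 (hX₀nn j₀)
      nlinarith [hYnn i₀]
    have e4 : r ^ (m₁ + (k + m₂)) = r ^ (m₁ + m₂) * r ^ k := by
      rw [← pow_add]; ring_nf
    rw [div_mul_eq_mul_div, le_div_iff₀ hPpos]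
    calc (B ^ k) i j * (Y i₀ * X₀ j₀ * ((B ^ m₁) i₀ i * (B ^ m₂) j j₀))
        = Y i₀ * ((B ^ m₁) i₀ i * ((B ^ k) i j * (B ^ m₂) j j₀) * X₀ j₀) := by ring
      _ ≤ χ₁ * r ^ (m₁ + (k + m₂)) := e3
      _ = χ₁ * r ^ (m₁ + m₂) * r ^ k := by rw [e4]; ring
  -- complex moments and spectrum membership
  have momC : ∀ k : ℕ, (fun i => (Y i : ℂ)) ⬝ᵥ ((A.map (Complex.ofReal ·)) ^ k) *ᵥ
      (fun i => (X₀ i : ℂ)) = (χ₁ : ℂ) * (χ₂ : ℂ) ^ k := by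
    intro k
    rw [aux_map_pow]
    have h := mom k
    have : ((Y ⬝ᵥ (A ^ k) *ᵥ X₀ : ℝ) : ℂ) = (χ₁ : ℂ) * (χ₂ : ℂ) ^ k := by
      rw [h]; push_cast; ring
    rw [← this]
    simp only [dotProduct, Matrix.mulVec, Matrix.map_apply]
    push_cast
    rfl
  have hmemC : (χ₂ : ℂ) ∈ spectrum ℂ (A.map (Complex.ofReal ·)) :=
    aux_mem_spectrum _ _ _ (χ₁ : ℂ) (χ₂ : ℂ)
      (by exact_mod_cast hχ₁.ne') momC
  -- upper bound for real parts of the spectrum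
  have hub : ∀ x ∈ {x : ℝ | ∃ μ ∈ spectrum ℂ (A.map (Complex.ofReal ·)), μ.re = x},
      x ≤ χ₂ := by
    rintro x ⟨μ, hμ, rfl⟩
    have hBmap : B.map (Complex.ofReal ·)
        = A.map (Complex.ofReal ·) + (δ : ℂ) • (1 : Matrix (Fin n) (Fin n) ℂ) := by
      ext i j
      rcases eq_or_ne i j with h | h <;>
        simp [hB, Matrix.map_apply, Matrix.one_apply, h]
    have hνmem : (μ + (δ : ℂ)) ∈ spectrum ℂ (B.map (Complex.ofReal ·)) := by
      rw [spectrum.mem_iff] at hμ ⊢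
      have : algebraMap ℂ (Matrix (Fin n) (Fin n) ℂ) (μ + (δ : ℂ))
          - B.map (Complex.ofReal ·)
          = algebraMap ℂ (Matrix (Fin n) (Fin n) ℂ) μ - A.map (Complex.ofReal ·) := by
        rw [hBmap, map_add, Algebra.algebraMap_eq_smul_one (A := Matrix (Fin n) (Fin n) ℂ) (δ : ℂ)]
        abel
      rw [this]
      exact hμ
    have habs := aux_abs_le B r hrpos hBk_nn hkey _ hνmem
    have hre : μ.re + δ ≤ ‖μ + (δ : ℂ)‖ := by
      have h := Complex.re_le_norm (μ + (δ : ℂ))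
      simpa using h
    have := hre.trans habs
    simp only [hrdef] at this
    linarith
  have hmemS : χ₂ ∈ {x : ℝ | ∃ μ ∈ spectrum ℂ (A.map (Complex.ofReal ·)), μ.re = x} :=
    ⟨(χ₂ : ℂ), hmemC, by simp⟩
  have hS : spectralBound A = χ₂ := by
    unfold spectralBound
    exact le_antisymm (csSup_le ⟨χ₂, hmemS⟩ hub) (le_csSup ⟨χ₂, hub⟩ hmemS)
  refine ⟨hS.symm, ?_⟩
  -- Part 2
  intro V_R V_L hVR hVL hAVR hAVL
  rw [hS] at hAVR hAVL
  have hBVR : B *ᵥ V_R = r • V_R := by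
    rw [hB, Matrix.add_mulVec, hAVR, Matrix.smul_mulVec, Matrix.one_mulVec,
      hrdef, add_smul]
  have hBTVL : Bᵀ *ᵥ V_L = r • V_L := by
    rw [hB, Matrix.transpose_add, Matrix.transpose_smul, Matrix.transpose_one,
      Matrix.add_mulVec, hAVL, Matrix.smul_mulVec, Matrix.one_mulVec,
      hrdef, add_smul]
  -- build the strictly positive matrix K
  choose mf hmf using fun p : Fin n × Fin n => hBirr p.1 p.2
  set N : ℕ := Finset.univ.sup mf with hN
  set K : Matrix (Fin n) (Fin n) ℝ := ∑ m ∈ Finset.range (N + 1), B ^ m with hK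
  have hsum_mulVec : ∀ (f : ℕ → Matrix (Fin n) (Fin n) ℝ) (v : Fin n → ℝ),
      (∑ m ∈ Finset.range (N + 1), f m) *ᵥ v = ∑ m ∈ Finset.range (N + 1), (f m) *ᵥ v := by
    intro f v
    induction (Finset.range (N + 1)) using Finset.cons_induction with
    | empty => simp [Matrix.zero_mulVec]
    | cons a s ha ih => rw [Finset.sum_cons, Finset.sum_cons, Matrix.add_mulVec, ih]
  have hKnn : ∀ i j, 0 ≤ K i j := by
    intro i j
    rw [hK, Matrix.sum_apply]
    exact Finset.sum_nonneg (fun m _ => hBk_nn m i j)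
  have hKpos : ∀ i j, 0 < K i j := by
    intro i j
    rw [hK, Matrix.sum_apply]
    refine Finset.sum_pos' (fun m _ => hBk_nn m i j) ?_
    exact ⟨mf (i, j), Finset.mem_range.2 (Nat.lt_succ_of_le
      (Finset.le_sup (Finset.mem_univ (i, j)))), hmf (i, j)⟩
  set ρ : ℝ := ∑ m ∈ Finset.range (N + 1), r ^ m with hρ
  have hρpos : 0 < ρ := Finset.sum_pos (fun m _ => pow_pos hrpos m) ⟨0, Finset.mem_range.2 (Nat.succ_pos N)⟩
  have hBmVR : ∀ m : ℕ, (B ^ m) *ᵥ V_R = r ^ m • V_R := by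
    intro m
    induction m with
    | zero => simp [Matrix.one_mulVec]
    | succ m ih => rw [pow_succ', ← Matrix.mulVec_mulVec, ih, Matrix.mulVec_smul, hBVR,
        smul_smul, ← pow_succ]
  have hBTmVL : ∀ m : ℕ, ((Bᵀ) ^ m) *ᵥ V_L = r ^ m • V_L := by
    intro m
    induction m with
    | zero => simp [Matrix.one_mulVec]
    | succ m ih => rw [pow_succ', ← Matrix.mulVec_mulVec, ih, Matrix.mulVec_smul, hBTVL,
        smul_smul, ← pow_succ]
  have hKVR : K *ᵥ V_R = ρ • V_R := by
    rw [hK, hsum_mulVec]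
    rw [hρ, Finset.sum_smul]
    exact Finset.sum_congr rfl (fun m _ => hBmVR m)
  have hKT : Kᵀ *ᵥ V_L = ρ • V_L := by
    have hKTdef : Kᵀ = ∑ m ∈ Finset.range (N + 1), (Bᵀ) ^ m := by
      rw [hK, Matrix.transpose_sum]
      exact Finset.sum_congr rfl (fun m _ => Matrix.transpose_pow B m)
    rw [hKTdef, hsum_mulVec, hρ, Finset.sum_smul]
    exact Finset.sum_congr rfl (fun m _ => hBTmVL m)
  have hdotK : ∀ x : Fin n → ℝ, V_L ⬝ᵥ (K *ᵥ x) = ρ * (V_L ⬝ᵥ x) := by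
    intro x
    rw [Matrix.dotProduct_mulVec]
    have hvm : V_L ᵥ* K = Kᵀ *ᵥ V_L := by
      rw [← Matrix.transpose_transpose K, Matrix.vecMul_transpose, Matrix.transpose_transpose]
    rw [hvm, hKT, smul_dotProduct, smul_eq_mul]
  -- Y-moments for powers of K
  have hYK : ∀ p : ℕ, Y ⬝ᵥ (K ^ p) *ᵥ X₀ = χ₁ * ρ ^ p := by
    intro p
    have h := mom_poly ((∑ m ∈ Finset.range (N + 1),
      (Polynomial.X + Polynomial.C δ) ^ m) ^ p)
    have h1 : Polynomial.aeval A ((∑ m ∈ Finset.range (N + 1),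
        (Polynomial.X + Polynomial.C δ) ^ m) ^ p) = K ^ p := by
      rw [map_pow, map_sum]
      congr 1
      rw [hK]
      refine Finset.sum_congr rfl (fun m _ => ?_)
      rw [map_pow, map_add, Polynomial.aeval_X, Polynomial.aeval_C,
        Algebra.algebraMap_eq_smul_one]
    have h2 : ((∑ m ∈ Finset.range (N + 1),
        (Polynomial.X + Polynomial.C δ) ^ m) ^ p).eval χ₂ = ρ ^ p := by
      rw [Polynomial.eval_pow, Polynomial.eval_finset_sum]
      simp [hρ, hrdef]
    rw [h1, h2] at h
    exact h
  have hKmVR : ∀ p : ℕ, (K ^ p) *ᵥ V_R = ρ ^ p • V_R := by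
    intro p
    induction p with
    | zero => simp [Matrix.one_mulVec]
    | succ p ih => rw [pow_succ', ← Matrix.mulVec_mulVec, ih, Matrix.mulVec_smul, hKVR,
        smul_smul, ← pow_succ]
  -- the defect vector
  set d : ℝ := V_L ⬝ᵥ V_R with hd
  set c₀ : ℝ := V_L ⬝ᵥ X₀ with hc₀
  have hdpos : 0 < d := by
    rw [hd]
    exact Finset.sum_pos (fun i _ => mul_pos (hVL i) (hVR i)) ⟨⟨0, hn⟩, Finset.mem_univ _⟩
  set u : Fin n → ℝ := d • X₀ - c₀ • V_R with hu
  set κ : ℝ := d * χ₁ - c₀ * (Y ⬝ᵥ V_R) with hκ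
  have hYx : ∀ p : ℕ, Y ⬝ᵥ ((K ^ p) *ᵥ u) = κ * ρ ^ p := by
    intro p
    rw [hu, Matrix.mulVec_sub, Matrix.mulVec_smul, Matrix.mulVec_smul,
      dotProduct_sub, dotProduct_smul, dotProduct_smul,
      hYK, hKmVR, dotProduct_smul]
    simp only [smul_eq_mul, hκ]
    ring
  have hVLu : V_L ⬝ᵥ u = 0 := by
    rw [hu, dotProduct_sub, dotProduct_smul, dotProduct_smul,
      ← hd, ← hc₀]
    simp only [smul_eq_mul]
    ring
  have hVLx : ∀ p : ℕ, V_L ⬝ᵥ ((K ^ p) *ᵥ u) = 0 := by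
    intro p
    induction p with
    | zero => simpa [Matrix.one_mulVec] using hVLu
    | succ p ih =>
      rw [pow_succ', ← Matrix.mulVec_mulVec, hdotK, ih, mul_zero]
  -- the contraction constant
  have hne : (Finset.univ : Finset (Fin n × Fin n)).Nonempty :=
    ⟨(⟨0, hn⟩, ⟨0, hn⟩), Finset.mem_univ _⟩
  set ε : ℝ := Finset.univ.inf' hne
    (fun p : Fin n × Fin n => K p.1 p.2 / (V_R p.1 * V_L p.2)) with hε
  have hεpos : 0 < ε := by
    rw [hε, Finset.lt_inf'_iff]
    exact fun p _ => div_pos (hKpos _ _) (mul_pos (hVR _) (hVL _))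
  have hεK : ∀ i j, ε * (V_R i * V_L j) ≤ K i j := by
    intro i j
    have h1 : ε ≤ K i j / (V_R i * V_L j) :=
      Finset.inf'_le _ (Finset.mem_univ (i, j))
    rwa [le_div_iff₀ (mul_pos (hVR i) (hVL j))] at h1
  set θ : ℝ := ρ - ε * d with hθ
  have hrowK : ∀ i, ∑ j, K i j * V_R j = ρ * V_R i := by
    intro i
    have : (K *ᵥ V_R) i = (ρ • V_R) i := by rw [hKVR]
    simpa [Matrix.mulVec, dotProduct] using this
  have hrow : ∀ i, ∑ j, (K i j - ε * (V_R i * V_L j)) * V_R j = θ * V_R i := by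
    intro i
    have h1 : ∑ j, (K i j - ε * (V_R i * V_L j)) * V_R j
        = (∑ j, K i j * V_R j) - ε * V_R i * (∑ j, V_L j * V_R j) := by
      rw [Finset.mul_sum, ← Finset.sum_sub_distrib]
      refine Finset.sum_congr rfl (fun j _ => ?_)
      ring
    have h2 : ∑ j, V_L j * V_R j = d := rfl
    rw [h1, hrowK, h2, hθ]
    ring
  have hθ0 : 0 ≤ θ := by
    have i : Fin n := ⟨0, hn⟩
    have h1 : 0 ≤ ∑ j, (K i j - ε * (V_R i * V_L j)) * V_R j :=
      Finset.sum_nonneg (fun j _ =>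
        mul_nonneg (sub_nonneg.2 (hεK i j)) (hVR j).le)
    rw [hrow i] at h1
    exact le_of_mul_le_mul_right (by linarith) (hVR i)
  have hθρ : θ < ρ := by
    rw [hθ]
    have := mul_pos hεpos hdpos
    linarith
  -- contraction step
  have hstep : ∀ (x : Fin n → ℝ) (c : ℝ), V_L ⬝ᵥ x = 0 → (∀ i, |x i| ≤ c * V_R i) →
      ∀ i, |(K *ᵥ x) i| ≤ (θ * c) * V_R i := by
    intro x c hx hxc i
    have hKx : (K *ᵥ x) i = ∑ j, (K i j - ε * (V_R i * V_L j)) * x j := by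
      have h1 : ∑ j, (K i j - ε * (V_R i * V_L j)) * x j
          = (∑ j, K i j * x j) - ε * V_R i * (∑ j, V_L j * x j) := by
        rw [Finset.mul_sum, ← Finset.sum_sub_distrib]
        refine Finset.sum_congr rfl (fun j _ => ?_)
        ring
      have h2 : (∑ j, V_L j * x j) = 0 := hx
      rw [h1, h2, mul_zero, sub_zero]
      rfl
    rw [hKx]
    refine le_trans (Finset.abs_sum_le_sum_abs _ _) ?_
    have h3 : ∀ j, |(K i j - ε * (V_R i * V_L j)) * x j|
        ≤ (K i j - ε * (V_R i * V_L j)) * (c * V_R j) := by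
      intro j
      rw [abs_mul, abs_of_nonneg (sub_nonneg.2 (hεK i j))]
      exact mul_le_mul_of_nonneg_left (hxc j) (sub_nonneg.2 (hεK i j))
    refine le_trans (Finset.sum_le_sum (fun j _ => h3 j)) ?_
    have h4 : ∑ j, (K i j - ε * (V_R i * V_L j)) * (c * V_R j)
        = c * ∑ j, (K i j - ε * (V_R i * V_L j)) * V_R j := by
      rw [Finset.mul_sum]
      refine Finset.sum_congr rfl (fun j _ => ?_)
      ring
    rw [h4, hrow i]
    ring_nf
    nlinarith [hVR i]
  -- the initial bound
  set c₂ : ℝ := Finset.univ.sup' ⟨⟨0, hn⟩, Finset.mem_univ _⟩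
    (fun i => |u i| / V_R i) with hc₂def
  have hc₂ : ∀ i, |u i| ≤ c₂ * V_R i := by
    intro i
    have h1 : |u i| / V_R i ≤ c₂ := by
      rw [hc₂def]; exact Finset.le_sup' (fun i => |u i| / V_R i) (Finset.mem_univ i)
    rwa [div_le_iff₀ (hVR i)] at h1
  have hbound : ∀ (p : ℕ) (i : Fin n), |((K ^ p) *ᵥ u) i| ≤ θ ^ p * c₂ * V_R i := by
    intro p
    induction p with
    | zero => intro i; simpa [Matrix.one_mulVec] using hc₂ i
    | succ p ih =>
      intro i
      have h1 : ((K ^ (p+1)) *ᵥ u) = K *ᵥ ((K ^ p) *ᵥ u) := by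
        rw [pow_succ', ← Matrix.mulVec_mulVec]
      rw [h1]
      have := hstep ((K ^ p) *ᵥ u) (θ ^ p * c₂) (hVLx p) ih i
      calc |(K *ᵥ ((K ^ p) *ᵥ u)) i| ≤ (θ * (θ ^ p * c₂)) * V_R i := this
        _ = θ ^ (p+1) * c₂ * V_R i := by ring
  -- κ = 0
  have hκ0 : κ = 0 := by
    have habs : ∀ p : ℕ, |κ| ≤ (Y ⬝ᵥ V_R * c₂) * (θ / ρ) ^ p := by
      intro p
      have h1 : |κ| * ρ ^ p = |Y ⬝ᵥ ((K ^ p) *ᵥ u)| := by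
        rw [hYx p, abs_mul, abs_of_pos (pow_pos hρpos p)]
      have h2 : |Y ⬝ᵥ ((K ^ p) *ᵥ u)| ≤ ∑ i, Y i * |((K ^ p) *ᵥ u) i| := by
        refine le_trans (Finset.abs_sum_le_sum_abs _ _) ?_
        refine Finset.sum_le_sum (fun i _ => ?_)
        rw [abs_mul, abs_of_nonneg (hYnn i)]
      have h3 : ∑ i, Y i * |((K ^ p) *ᵥ u) i| ≤ θ ^ p * c₂ * (Y ⬝ᵥ V_R) := by
        have := Finset.sum_le_sum (fun i (_ : i ∈ Finset.univ) =>
          mul_le_mul_of_nonneg_left (hbound p i) (hYnn i))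
        calc ∑ i, Y i * |((K ^ p) *ᵥ u) i| ≤ ∑ i, Y i * (θ ^ p * c₂ * V_R i) := this
          _ = θ ^ p * c₂ * (Y ⬝ᵥ V_R) := by
              show ∑ i, Y i * (θ ^ p * c₂ * V_R i) = θ ^ p * c₂ * ∑ i, Y i * V_R i
              rw [Finset.mul_sum]
              refine Finset.sum_congr rfl (fun i _ => ?_)
              ring
      have h4 : |κ| * ρ ^ p ≤ θ ^ p * c₂ * (Y ⬝ᵥ V_R) := by
        rw [h1]; exact h2.trans h3
      have h5 : (0:ℝ) < ρ ^ p := pow_pos hρpos p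
      rw [div_pow, ← le_div_iff₀ h5] at *
      calc |κ| ≤ θ ^ p * c₂ * (Y ⬝ᵥ V_R) / ρ ^ p := h4
        _ = (Y ⬝ᵥ V_R * c₂) * (θ ^ p / ρ ^ p) := by ring
    have htend : Filter.Tendsto (fun p : ℕ => (Y ⬝ᵥ V_R * c₂) * (θ / ρ) ^ p)
        Filter.atTop (nhds 0) := by
      have h1 : (0:ℝ) ≤ θ / ρ := div_nonneg hθ0 hρpos.le
      have h2 : θ / ρ < 1 := (div_lt_one hρpos).2 hθρ
      have := tendsto_pow_atTop_nhds_zero_of_lt_one h1 h2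
      simpa using this.const_mul (Y ⬝ᵥ V_R * c₂)
    have : |κ| ≤ 0 := ge_of_tendsto' htend (fun p => habs p) |>.trans_eq rfl
    exact abs_eq_zero.1 (le_antisymm this (abs_nonneg κ))
  -- conclude
  show χ₁ = (Y ⬝ᵥ V_R) * (V_L ⬝ᵥ X₀) / (V_L ⬝ᵥ V_R)
  rw [← hc₀, ← hd, eq_div_iff hdpos.ne']
  rw [hκ] at hκ0
  linarith [hκ0]
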